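/- Let $M$ be a topological space with a multiplication $\mu : M \times M \to M$ continuous, admitting a two-sided unit $m \in M$ (i.e. $\mu(m,x) = \mu(x,m) = x$ for all $x$). If $M$ is path-connected, then the fundamental group $\pi_1(M, m)$ is abelian. -/

import Mathlib

open CategoryTheory

noncomputable section

namespace HSpaceAuxFG

attribute [local instance] Path.Homotopic.setoid

variable {M : Type*} [TopologicalSpace M] (μ : M × M → M) (hμ : Continuous μ) (m : M)
  (hm₁ : ∀ x, μ (m, x) = x) (hm₂ : ∀ x, μ (x, m) = x)

/-- Pointwise product of loops via `μ`. -/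
def hmul (p q : Path m m) : Path m m where
  toFun t := μ (p t, q t)
  continuous_toFun := hμ.comp (p.continuous.prodMk q.continuous)
  source' := by simp [hm₁]
  target' := by simp [hm₁]

@[simp] lemma hmul_apply (p q : Path m m) (t : unitInterval) :
    hmul μ hμ m hm₁ p q t = μ (p t, q t) := rfl

lemma hmul_homotopic {p p' q q' : Path m m} (hp : p.Homotopic p') (hq : q.Homotopic q') :
    (hmul μ hμ m hm₁ p q).Homotopic (hmul μ hμ m hm₁ p' q') := by
  obtain ⟨F⟩ := hp
  obtain ⟨G⟩ := hq
  exact ⟨{ toFun := fun x => μ (F x, G x)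
           continuous_toFun := hμ.comp (F.continuous.prodMk G.continuous)
           map_zero_left := fun x => by simp
           map_one_left := fun x => by simp
           prop' := fun t x hx => by
             show μ (F (t, x), G (t, x)) = μ (p x, q x)
             exact congrArg₂ (fun a b => μ (a, b)) (F.prop t x hx) (G.prop t x hx) }⟩

/-- Pointwise product of loop classes via `μ`. -/
def qmul (q₁ q₂ : Path.Homotopic.Quotient m m) : Path.Homotopic.Quotient m m :=
  Quotient.map₂ (hmul μ hμ m hm₁)
    (fun _ _ hp _ _ hq => hmul_homotopic μ hμ m hm₁ hp hq) q₁ q₂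

@[simp] lemma qmul_lift (p q : Path m m) :
    qmul μ hμ m hm₁ ⟦p⟧ ⟦q⟧ = ⟦hmul μ hμ m hm₁ p q⟧ := rfl

lemma hmul_refl_left (p : Path m m) : hmul μ hμ m hm₁ (Path.refl m) p = p := by
  ext t; exact hm₁ _

lemma hmul_refl_right (hm₂ : ∀ x, μ (x, m) = x) (p : Path m m) :
    hmul μ hμ m hm₁ p (Path.refl m) = p := by
  ext t; exact hm₂ _

lemma hmul_trans (p q r s : Path m m) :
    hmul μ hμ m hm₁ (p.trans q) (r.trans s) =
      (hmul μ hμ m hm₁ p r).trans (hmul μ hμ m hm₁ q s) := by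
  ext t
  simp only [hmul_apply, Path.trans_apply]
  split_ifs <;> rfl

end HSpaceAuxFG

end

/-- If `M` is a path-connected topological space with a continuous multiplication
`μ : M × M → M` admitting a strict two-sided unit `m`, then the fundamental
group `π₁(M, m)` is abelian. -/
theorem fundamentalGroup_comm_of_hspace
    (M : Type*) [TopologicalSpace M] [PathConnectedSpace M]
    (μ : M × M → M) (hμ : Continuous μ) (m : M)
    (hunit : ∀ x : M, μ (m, x) = x ∧ μ (x, m) = x) :
    ∀ a b : FundamentalGroup M m, a * b = b * a := by
  letI := Path.Homotopic.setoid m m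
  have hm₁ : ∀ x, μ (m, x) = x := fun x => (hunit x).1
  have hm₂ : ∀ x, μ (x, m) = x := fun x => (hunit x).2
  set star := HSpaceAuxFG.qmul μ hμ m hm₁ with hstar
  -- the first unital operation: pointwise μ-product
  have h₁ : EckmannHilton.IsUnital star ⟦Path.refl m⟧ :=
    EckmannHilton.IsUnital.mk
      { left_id := fun q => Quotient.inductionOn q fun p => by
          rw [hstar, HSpaceAuxFG.qmul_lift, HSpaceAuxFG.hmul_refl_left μ hμ m hm₁]
        right_id := fun q => Quotient.inductionOn q fun p => by
          rw [hstar, HSpaceAuxFG.qmul_lift, HSpaceAuxFG.hmul_refl_right μ hμ m hm₁ hm₂] }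
  -- the second unital operation: path composition
  have h₂ : EckmannHilton.IsUnital
      (fun p q : Path.Homotopic.Quotient m m => p.trans q) ⟦Path.refl m⟧ :=
    EckmannHilton.IsUnital.mk
      { left_id := fun q => Category.id_comp (obj := FundamentalGroupoid M)
          (X := FundamentalGroupoid.mk m) (Y := FundamentalGroupoid.mk m) q
        right_id := fun q => Category.comp_id (obj := FundamentalGroupoid M)
          (X := FundamentalGroupoid.mk m) (Y := FundamentalGroupoid.mk m) q }
  have distrib : ∀ a b c d : Path.Homotopic.Quotient m m,
      star (a.trans b) (c.trans d) = (star a c).trans (star b d) := by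
    intro a b c d
    refine Quotient.inductionOn₂ a b fun p q => ?_
    refine Quotient.inductionOn₂ c d fun r s => ?_
    exact congrArg (fun x : Path m m => (⟦x⟧ : Path.Homotopic.Quotient m m))
      (HSpaceAuxFG.hmul_trans μ hμ m hm₁ p q r s)
  have comm := EckmannHilton.mul_comm h₁ h₂ distrib
  intro a b
  show b ≫ a = a ≫ b
  exact comm.comm b a
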